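/- Let X be a countably infinite set and let F = (F_x)_{x∈X} be a family of finite-dimensional complex normed vector spaces. Equip the space of vector fields Γ(X;F) = ∏_{x∈X} F_x with the product topology, and let A : Γ(X;F) → Γ(X;F) be a continuous linear operator. Then A is surjective if and only if the following injectivity holds: whenever φ = (φ_x)_{x∈X} is a finitely supported family of continuous linear functionals φ_x ∈ F_x' such that ∑_{x∈X} φ_x(Af(x)) = 0 for every f ∈ Γ(X;F), then φ_x = 0 for all x ∈ X. -/

import Mathlib

open Module

section EidelheitAux

/-- A continuous linear map out of a product depends on finitely many coordinates. -/
private lemma eidelheit_dep {X : Type*} (F : X → Type*) [∀ x, NormedAddCommGroup (F x)]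
    [∀ x, NormedSpace ℂ (F x)] {G : Type*} [NormedAddCommGroup G] [NormedSpace ℂ G]
    (u : (∀ x, F x) →L[ℂ] G) :
    ∃ D : Finset X, ∀ f : ∀ x, F x, (∀ y ∈ D, f y = 0) → u f = 0 := by
  classical
  have h0 : u ⁻¹' Metric.ball 0 1 ∈ nhds (0 : ∀ x, F x) := by
    have := u.continuous.continuousAt (x := 0)
    have hb : Metric.ball (0 : G) 1 ∈ nhds (u 0) := by
      rw [map_zero]; exact Metric.ball_mem_nhds _ one_pos
    exact this.preimage_mem_nhds hb
  rw [nhds_pi, Filter.mem_pi] at h0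
  obtain ⟨I, hIfin, t, ht, hsub⟩ := h0
  refine ⟨hIfin.toFinset, fun f hf => ?_⟩
  have key : ∀ c : ℂ, ‖u (c • f)‖ < 1 := by
    intro c
    have : c • f ∈ Set.pi I t := by
      intro y hy
      have : f y = 0 := hf y (hIfin.mem_toFinset.2 hy)
      have h0y : (0 : ∀ x, F x) y ∈ t y := mem_of_mem_nhds (ht y)
      simpa [this] using h0y
    have := hsub this
    simpa using this
  by_contra hne
  have hpos : 0 < ‖u f‖ := by
    rcases (norm_nonneg (u f)).lt_or_eq with h | h
    · exact h
    · exact absurd (norm_eq_zero.1 h.symm) hne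
  have := key ((2 : ℂ) / (‖u f‖ : ℂ))
  rw [map_smul, norm_smul] at this
  have h2 : ‖(2 : ℂ) / (‖u f‖ : ℂ)‖ = 2 / ‖u f‖ := by
    simp [norm_div]
  have h3 : 2 / ‖u f‖ * ‖u f‖ = 2 := by field_simp
  rw [h2, h3] at this
  norm_num at this


private lemma eidelheit_stage {X : Type*} (F : X → Type*) [∀ x, NormedAddCommGroup (F x)]
    [∀ x, NormedSpace ℂ (F x)] [∀ x, FiniteDimensional ℂ (F x)]
    (A : (∀ x, F x) →L[ℂ] (∀ x, F x))
    (hinj : ∀ φ : ∀ x, F x →L[ℂ] ℂ, {x | φ x ≠ 0}.Finite →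
        (∀ f : ∀ x, F x, ∑ᶠ x, φ x (A f x) = 0) → ∀ x, φ x = 0)
    (T : Finset X) (g : ∀ x, F x) :
    ∃ f : ∀ x, F x, ∀ x ∈ T, A f x = g x := by
  classical
  set Ψ : (∀ x, F x) →ₗ[ℂ] (∀ x : T, F x) :=
    LinearMap.pi (fun x : T => (LinearMap.proj (x : X)).comp
      (A : (∀ x, F x) →ₗ[ℂ] (∀ x, F x))) with hΨ
  have hΨapp : ∀ f (x : T), Ψ f x = A f (x : X) := fun f x => rfl
  by_cases hr : LinearMap.range Ψ = ⊤
  · have hmem : (fun x : T => g (x : X)) ∈ LinearMap.range Ψ := hr ▸ Submodule.mem_top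
    obtain ⟨f, hf⟩ := hmem
    exact ⟨f, fun x hx => congrFun hf ⟨x, hx⟩⟩
  · exfalso
    obtain ⟨ψ, hψ0, hψbot⟩ := Submodule.exists_dual_map_eq_bot_of_lt_top
      (lt_top_iff_ne_top.2 hr) inferInstance
    have hψker : ∀ f, ψ (Ψ f) = 0 := by
      intro f
      have : ψ (Ψ f) ∈ Submodule.map ψ (LinearMap.range Ψ) :=
        Submodule.mem_map_of_mem ⟨f, rfl⟩
      rw [hψbot] at this
      simpa using this
    set φ : ∀ x, F x →L[ℂ] ℂ := fun x =>
      if h : x ∈ T then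
        LinearMap.toContinuousLinearMap (ψ.comp (LinearMap.single ℂ (fun x : T => F x) ⟨x, h⟩))
      else 0 with hφ
    have hφmem : ∀ (x : X) (h : x ∈ T) (v : F x),
        φ x v = ψ (Pi.single (⟨x, h⟩ : T) v) := by
      intro x h v
      simp only [hφ, dif_pos h]
      rfl
    have hφ0 : ∀ x : X, x ∉ T → φ x = 0 := by
      intro x hxT
      simp only [hφ]
      rw [dif_neg hxT]
    have hfin : {x | φ x ≠ 0}.Finite := by
      apply T.finite_toSet.subset
      intro x hx
      by_contra hxT
      exact hx (hφ0 x (by simpa using hxT))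
    have hsum : ∀ f : ∀ x, F x, ∑ᶠ x, φ x (A f x) = 0 := by
      intro f
      have hsupp : Function.support (fun x => φ x (A f x)) ⊆ (T : Set X) := by
        intro x hx
        by_contra hxT
        apply hx
        show φ x (A f x) = 0
        rw [hφ0 x (by simpa using hxT)]
        rfl
      rw [finsum_eq_finset_sum_of_support_subset _ hsupp,
        ← Finset.sum_coe_sort T (fun x => φ x (A f x))]
      have h1 : ∀ x : T, φ (x : X) (A f (x : X)) = ψ (Pi.single x (Ψ f x)) :=
        fun x => hφmem (x : X) x.2 (A f (x : X))
      calc ∑ x : T, φ (x : X) (A f (x : X))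
          = ∑ x : T, ψ (Pi.single x (Ψ f x)) := Finset.sum_congr rfl (fun x _ => h1 x)
        _ = ψ (∑ x : T, Pi.single x (Ψ f x)) := (map_sum ψ _ _).symm
        _ = ψ (Ψ f) := by rw [Finset.univ_sum_single]
        _ = 0 := hψker f
    have hzero := hinj φ hfin hsum
    apply hψ0
    apply LinearMap.ext
    intro w
    have : w = ∑ x : T, Pi.single x (w x) := (Finset.univ_sum_single w).symm
    rw [this, map_sum]
    simp only [LinearMap.zero_apply]
    apply Finset.sum_eq_zero
    intro x _
    have := hφmem (x : X) x.2 (w x)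
    rw [hzero (x : X)] at this
    simpa using this.symm


end EidelheitAux

set_option maxHeartbeats 1000000 in
set_option synthInstance.maxHeartbeats 200000 in
/-- **Eidelheit-type surjectivity criterion.**
Let `X` be a countably infinite set and `F = (F x)_{x ∈ X}` a family of finite-dimensional
complex normed vector spaces.  Equip `Γ(X;F) = ∀ x, F x` with the product topology and let
`A : Γ(X;F) → Γ(X;F)` be a continuous linear operator.  Then `A` is surjective if and only if
for every finitely supported family `φ = (φ x)_{x ∈ X}` of continuous linear functionals
`φ x ∈ (F x)'` satisfying `∑ x, φ x (A f x) = 0` for all `f ∈ Γ(X;F)`, we have `φ x = 0`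
for all `x`. -/
theorem surjective_iff_dual_injective
    {X : Type*} [Countable X] [Infinite X]
    (F : X → Type*) [∀ x, NormedAddCommGroup (F x)] [∀ x, NormedSpace ℂ (F x)]
    [∀ x, FiniteDimensional ℂ (F x)]
    (A : (∀ x, F x) →L[ℂ] (∀ x, F x)) :
    Function.Surjective A ↔
      ∀ φ : ∀ x, F x →L[ℂ] ℂ, {x | φ x ≠ 0}.Finite →
        (∀ f : ∀ x, F x, ∑ᶠ x, φ x (A f x) = 0) → ∀ x, φ x = 0 := by
  classical
  constructor
  · -- easy direction
    intro hsurj φ hfin hsum x₀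
    ext v
    obtain ⟨f, hf⟩ := hsurj (Pi.single x₀ v)
    have h1 := hsum f
    rw [hf] at h1
    have h2 : ∑ᶠ x, φ x (Pi.single x₀ v x) = φ x₀ v := by
      rw [finsum_eq_single _ x₀ (fun x hx => by rw [Pi.single_eq_of_ne hx, map_zero]),
        Pi.single_eq_same]
    simp only [ContinuousLinearMap.zero_apply]
    rw [← h2]
    exact h1
  · -- hard direction
    intro hinj g
    have hdep : ∀ x : X, ∃ Dx : Finset X, ∀ f f' : ∀ y, F y,
        (∀ y ∈ Dx, f y = f' y) → A f x = A f' x := by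
      intro x
      obtain ⟨Dx, hDx⟩ := eidelheit_dep F ((ContinuousLinearMap.proj x).comp A)
      refine ⟨Dx, fun f f' h => ?_⟩
      have h1 := hDx (f - f') (fun y hy => by simp [h y hy, sub_eq_zero])
      have h2 : A (f - f') x = 0 := h1
      rw [map_sub] at h2
      exact sub_eq_zero.mp h2
    choose D hD using hdep
    obtain ⟨dX⟩ := nonempty_denumerable X
    let e : ℕ ≃ X := (Denumerable.eqv X).symm
    let S : ℕ → Finset X := fun n => (Finset.range n).biUnion (fun i => D (e i))
    have hSmono : ∀ {n m : ℕ}, n ≤ m → S n ⊆ S m := fun h =>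
      Finset.biUnion_subset_biUnion_of_subset_left _ (Finset.range_subset_range.2 h)
    have hDS : ∀ {i n : ℕ}, i < n → D (e i) ⊆ S n := fun h y hy =>
      Finset.mem_biUnion.2 ⟨_, Finset.mem_range.2 h, hy⟩
    let K : ℕ → Set (∀ x, F x) := fun m => {f | ∀ i < m, A f (e i) = g (e i)}
    have hKne : ∀ m, (K m).Nonempty := by
      intro m
      obtain ⟨f, hf⟩ := eidelheit_stage F A hinj ((Finset.range m).image e) g
      exact ⟨f, fun i hi => hf (e i) (Finset.mem_image_of_mem e (Finset.mem_range.2 hi))⟩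
    have hKmono : ∀ {m m' : ℕ}, m ≤ m' → K m' ⊆ K m :=
      fun h f hf i hi => hf i (lt_of_lt_of_le hi h)
    let res : ∀ n : ℕ, (∀ x, F x) →ₗ[ℂ] (∀ y : S n, F y) :=
      fun n => LinearMap.pi (fun y : S n => LinearMap.proj (y : X))
    let N : ℕ → Submodule ℂ (∀ x, F x) := fun m =>
      { carrier := {f | ∀ i < m, A f (e i) = 0}
        add_mem' := fun {a b} ha hb i hi => by
          rw [map_add]; simp [ha i hi, hb i hi]
        zero_mem' := fun i hi => by simp
        smul_mem' := fun c a ha i hi => by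
          rw [map_smul]; simp [ha i hi] }
    have hNmono : ∀ {m m' : ℕ}, m ≤ m' → N m' ≤ N m :=
      fun h f hf i hi => hf i (lt_of_lt_of_le hi h)
    let P : ∀ n : ℕ, ℕ → Submodule ℂ (∀ y : {z // z ∈ S n}, F y) :=
      fun n m => (N m).map (res n)
    let R : ∀ n : ℕ, ℕ → Set (∀ y : {z // z ∈ S n}, F y) :=
      fun n m => (res n) '' (K m)
    have hPmono : ∀ n {m m' : ℕ}, m ≤ m' → P n m' ≤ P n m := by
      intro n m m' h
      exact Submodule.map_mono (hNmono h)
    have hRmono : ∀ n {m m' : ℕ}, m ≤ m' → R n m' ⊆ R n m := by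
      intro n m m' h
      exact Set.image_mono (hKmono h)
    have hRne : ∀ n m, (R n m).Nonempty := fun n m => (hKne m).image _
    have hcoset1 : ∀ n m a b, a ∈ R n m → b ∈ R n m → a - b ∈ P n m := by
      rintro n m a b ⟨f, hf, rfl⟩ ⟨f', hf', rfl⟩
      refine ⟨f - f', fun i hi => ?_, map_sub _ _ _⟩
      rw [map_sub]
      simp [hf i hi, hf' i hi]
    have hcoset2 : ∀ n m a p, a ∈ R n m → p ∈ P n m → a + p ∈ R n m := by
      rintro n m a p ⟨f, hf, rfl⟩ ⟨q, hq, rfl⟩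
      refine ⟨f + q, fun i hi => ?_, map_add _ _ _⟩
      rw [map_add]
      simp [hf i hi, hq i hi]
    -- stabilization
    have hstab : ∀ n, ∃ M, n ≤ M ∧ ∀ m, M ≤ m → R n m = R n M := by
      intro n
      haveI hfd : FiniteDimensional ℂ (∀ y : {z // z ∈ S n}, F y) := inferInstance
      set r : ℕ → ℕ := fun m => Module.finrank ℂ (P n m) with hr
      have hrmin : ∃ m₀, ∀ m, r m₀ ≤ r m := by
        obtain ⟨m₀, hm₀⟩ := Nat.sInf_mem (Set.range_nonempty r)
        exact ⟨m₀, fun m => hm₀ ▸ Nat.sInf_le ⟨m, rfl⟩⟩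
      obtain ⟨m₀, hm₀⟩ := hrmin
      refine ⟨max n m₀, le_max_left _ _, fun m hm => ?_⟩
      have hm₀M : m₀ ≤ max n m₀ := le_max_right _ _
      have hm₀m : m₀ ≤ m := le_trans hm₀M hm
      have hPeq : P n m = P n (max n m₀) := by
        have h1 : P n m ≤ P n (max n m₀) := hPmono n hm
        have h2 : r m = r (max n m₀) := by
          have ha : r m ≤ r m₀ := Submodule.finrank_mono (hPmono n hm₀m)
          have hb : r (max n m₀) ≤ r m₀ := Submodule.finrank_mono (hPmono n hm₀M)
          have hc := hm₀ m
          have hd := hm₀ (max n m₀)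
          omega
        exact Submodule.eq_of_le_of_finrank_eq h1 h2
      apply Set.Subset.antisymm (hRmono n hm)
      intro a ha
      obtain ⟨b, hb⟩ := hRne n m
      have hab : a - b ∈ P n m := by
        rw [hPeq]
        exact hcoset1 n (max n m₀) a b ha (hRmono n hm hb)
      have := hcoset2 n m b (a - b) hb hab
      rwa [show b + (a - b) = a by abel] at this
    choose M hMge hMeq using hstab
    let tr : ∀ n : ℕ, (∀ y : S (n+1), F y) → (∀ y : S n, F y) :=
      fun n a y => a ⟨(y : X), hSmono (Nat.le_succ n) y.2⟩
    have hstep : ∀ n a, a ∈ R n (M n) → ∃ b, b ∈ R (n+1) (M (n+1)) ∧ tr n b = a := by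
      intro n a ha
      have h1 : R n (max (M n) (M (n+1))) = R n (M n) := hMeq n _ (le_max_left _ _)
      have h2 : R (n+1) (max (M n) (M (n+1))) = R (n+1) (M (n+1)) :=
        hMeq (n+1) _ (le_max_right _ _)
      rw [← h1] at ha
      obtain ⟨f, hf, rfl⟩ := ha
      exact ⟨res (n+1) f, h2 ▸ ⟨f, hf, rfl⟩, rfl⟩
    choose nxt hnxt1 hnxt2 using hstep
    obtain ⟨a0, ha0⟩ := hRne 0 (M 0)
    let seq : ∀ n : ℕ, {a : ∀ y : S n, F y // a ∈ R n (M n)} :=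
      fun n => Nat.rec ⟨a0, ha0⟩ (fun k p => ⟨nxt k p.1 p.2, hnxt1 k p.1 p.2⟩) n
    have hseq : ∀ n, tr n (seq (n+1)).1 = (seq n).1 := fun n => hnxt2 n (seq n).1 (seq n).2
    have hcompat : ∀ n m (h : n ≤ m) (y : X) (hy : y ∈ S n),
        (seq m).1 ⟨y, hSmono h hy⟩ = (seq n).1 ⟨y, hy⟩ := by
      intro n m h
      induction m, h using Nat.le_induction with
      | base => intro y hy; rfl
      | succ m hnm ih =>
        intro y hy
        have h1 : (seq (m+1)).1 ⟨y, hSmono (Nat.le_succ m) (hSmono hnm hy)⟩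
            = (seq m).1 ⟨y, hSmono hnm hy⟩ := congrFun (hseq m) ⟨y, hSmono hnm hy⟩
        exact h1.trans (ih y hy)
    let f : ∀ x, F x := fun y =>
      if hy : ∃ n, y ∈ S n then (seq (Nat.find hy)).1 ⟨y, Nat.find_spec hy⟩ else 0
    have hfagree : ∀ (n : ℕ) (y : X) (hy : y ∈ S n), f y = (seq n).1 ⟨y, hy⟩ := by
      intro n y hy
      have hey : ∃ k, y ∈ S k := ⟨n, hy⟩
      have hle : Nat.find hey ≤ n := Nat.find_min' hey hy
      show (if hy' : ∃ k, y ∈ S k then (seq (Nat.find hy')).1 ⟨y, Nat.find_spec hy'⟩ else 0)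
          = (seq n).1 ⟨y, hy⟩
      rw [dif_pos hey]
      exact (hcompat (Nat.find hey) n hle y (Nat.find_spec hey)).symm
    refine ⟨f, funext fun x => ?_⟩
    obtain ⟨i, rfl⟩ : ∃ i, e i = x := ⟨e.symm x, e.apply_symm_apply x⟩
    obtain ⟨f', hf'K, hf'res⟩ := (seq (i+1)).2
    have hagree : ∀ y ∈ D (e i), f y = f' y := by
      intro y hy
      have hyS : y ∈ S (i+1) := hDS (Nat.lt_succ_self i) hy
      rw [hfagree (i+1) y hyS, ← hf'res]
      rfl
    rw [hD (e i) f f' hagree]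
    exact hf'K i (lt_of_lt_of_le (Nat.lt_succ_self i) (hMge (i+1)))
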